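/- Let f : ℝ≥0 → ℝ ∪ {−∞} be a strictly increasing function that satisfies Condition 2. Then for every positive-admitting normalized instance with two agents, every allocation chosen by the additive welfarist rule with f is EF1. -/
import Mathlib


open scoped BigOperators

noncomputable section

namespace FairDiv

/-- The bundle of goods received by agent `i` under the assignment `A` of goods to agents. -/
def bundle {n m : ℕ} (A : Fin m → Fin n) (i : Fin n) : Finset (Fin m) :=
  Finset.univ.filter fun g => A g = i

/-- Additive utility of agent `i` for a set `S` of goods. -/
def util {n m : ℕ} (u : Fin n → Fin m → ℝ) (i : Fin n) (S : Finset (Fin m)) : ℝ :=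
  ∑ g ∈ S, u i g

/-- Envy-freeness up to one good. -/
def EF1 {n m : ℕ} (u : Fin n → Fin m → ℝ) (A : Fin m → Fin n) : Prop :=
  ∀ i j : Fin n, bundle A j ≠ ∅ →
    ∃ g ∈ bundle A j, util u i ((bundle A j).erase g) ≤ util u i (bundle A i)

/-- Welfare of an allocation under the additive welfarist rule with function `f`. -/
def welfare {n m : ℕ} (f : ℝ → EReal) (u : Fin n → Fin m → ℝ) (A : Fin m → Fin n) : EReal :=
  ∑ i : Fin n, f (util u i (bundle A i))

/-- An allocation is chosen by the additive welfarist rule with `f` if it maximizes welfare. -/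
def Chosen {n m : ℕ} (f : ℝ → EReal) (u : Fin n → Fin m → ℝ) (A : Fin m → Fin n) : Prop :=
  ∀ B : Fin m → Fin n, welfare f u B ≤ welfare f u A

/-- An instance is positive-admitting if some allocation gives everyone positive utility. -/
def PositiveAdmitting {n m : ℕ} (u : Fin n → Fin m → ℝ) : Prop :=
  ∃ B : Fin m → Fin n, ∀ i : Fin n, 0 < util u i (bundle B i)

def IdenticalGood {n m : ℕ} (u : Fin n → Fin m → ℝ) : Prop :=
  ∀ i : Fin n, ∃ a : ℝ, 0 < a ∧ ∀ g : Fin m, u i g = a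

def TwoValue {n m : ℕ} (u : Fin n → Fin m → ℝ) : Prop :=
  ∃ a₁ a₂ : ℝ, a₁ ≠ a₂ ∧ 0 ≤ a₁ ∧ 0 ≤ a₂ ∧ ∀ i g, u i g = a₁ ∨ u i g = a₂

def Normalized {n m : ℕ} (u : Fin n → Fin m → ℝ) : Prop :=
  ∀ i j : Fin n, util u i Finset.univ = util u j Finset.univ

def IntegerValued {n m : ℕ} (u : Fin n → Fin m → ℝ) : Prop :=
  ∀ i g, ∃ z : ℕ, u i g = (z : ℝ)

def Binary {n m : ℕ} (u : Fin n → Fin m → ℝ) : Prop :=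
  ∀ i g, u i g = 0 ∨ u i g = 1

/-- `Δ_{f,k}(x) = f((k+1)x) − f(kx)`, valued in `EReal` (it is `+∞` iff `f(kx) = −∞`). -/
def Delta (f : ℝ → EReal) (k : ℕ) (x : ℝ) : EReal :=
  f (((k : ℝ) + 1) * x) - f ((k : ℝ) * x)

/-- Condition 1: `Δ_{f,k}(b) > Δ_{f,k+1}(a)` for all `k ∈ ℤ≥0` and `a, b ∈ ℝ>0`. -/
def Cond1 (f : ℝ → EReal) : Prop :=
  ∀ k : ℕ, ∀ a b : ℝ, 0 < a → 0 < b → Delta f (k + 1) a < Delta f k b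

/-- Condition 1a: `Δ_{f,k}` is constant on `ℝ>0` for every `k ∈ ℤ>0`. -/
def Cond1a (f : ℝ → EReal) : Prop :=
  ∀ k : ℕ, 0 < k → ∀ x y : ℝ, 0 < x → 0 < y → Delta f k x = Delta f k y

/-- Condition 2. -/
def Cond2 (f : ℝ → EReal) : Prop :=
  ∀ a b c d : ℝ, 0 ≤ a → 0 ≤ b → 0 ≤ c → 0 ≤ d →
    min a b ≤ min c d → a * b < c * d → f a + f b < f c + f d

/-- Condition 3: `Δ_{f,k}(b) > Δ_{f,k+1}(a)` for all `k ∈ ℤ≥0` and `a, b ∈ ℤ>0`. -/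
def Cond3 (f : ℝ → EReal) : Prop :=
  ∀ k : ℕ, ∀ a b : ℕ, 0 < a → 0 < b → Delta f (k + 1) (a : ℝ) < Delta f k (b : ℝ)

/-- Condition 3a. -/
def Cond3a (f : ℝ → EReal) : Prop :=
  ∀ k l : ℕ, l < k → ∀ a b : ℕ, 0 < a → 0 < b → Delta f k (a : ℝ) < Delta f l (b : ℝ)

/-- Condition 3b: `Δ_{f,k}(1) > Δ_{f,k+1}(a) > Δ_{f,k+2}(1)` for `k ∈ ℤ≥0`, `a ∈ ℤ>0`. -/
def Cond3b (f : ℝ → EReal) : Prop :=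
  ∀ k : ℕ, ∀ a : ℕ, 0 < a →
    Delta f (k + 1) (a : ℝ) < Delta f k 1 ∧ Delta f (k + 2) 1 < Delta f (k + 1) (a : ℝ)

/-- Condition 4: `Δ_{f,k}(1) > Δ_{f,k+1}(1)` for all `k ∈ ℤ≥0`. -/
def Cond4 (f : ℝ → EReal) : Prop :=
  ∀ k : ℕ, Delta f (k + 1) 1 < Delta f k 1

/-- Condition 5. -/
def Cond5 (f : ℝ → EReal) : Prop :=
  ∀ a b k l r : ℕ, 0 < a → 0 < b → b ≤ a → l * b + r * a < (k + 1) * b →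
    Delta f (k + 1) (a : ℝ) <
        f (((l : ℝ) + 1) * (b : ℝ) + (r : ℝ) * (a : ℝ)) - f ((l : ℝ) * (b : ℝ) + (r : ℝ) * (a : ℝ))
      ∧ Delta f (k + 2) 1 < Delta f (k + 1) (a : ℝ)

/-- Condition 6a: `f((k+1)b−1) − f(kb−1) > Δ_{f,k}(a)` for all `k, a, b ∈ ℤ>0`. -/
def Cond6a (f : ℝ → EReal) : Prop :=
  ∀ k a b : ℕ, 0 < k → 0 < a → 0 < b →
    Delta f k (a : ℝ) < f (((k : ℝ) + 1) * (b : ℝ) - 1) - f ((k : ℝ) * (b : ℝ) - 1)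

/-- Condition 6b: `f(y+b) − f(y) > f(x+a) − f(x)` whenever `x/a ≥ (y+1)/b`. -/
def Cond6b (f : ℝ → EReal) : Prop :=
  ∀ a b : ℕ, ∀ x y : ℕ, 0 < a → 0 < b → ((y : ℝ) + 1) / (b : ℝ) ≤ (x : ℝ) / (a : ℝ) →
    f ((x : ℝ) + (a : ℝ)) - f (x : ℝ) < f ((y : ℝ) + (b : ℝ)) - f (y : ℝ)

/-- Modified logarithmic function `λ_c(x) = log (x + c)`, with `log 0 = −∞`. -/
def lam (c : ℝ) (x : ℝ) : EReal :=
  if x + c = 0 then ⊥ else ((Real.log (x + c) : ℝ) : EReal)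

/-- The `p`-mean function `φ_p`, with `φ_p(0) = −∞` for `p ≤ 0`. -/
def phi (p : ℝ) (x : ℝ) : EReal :=
  if 0 < p then ((x ^ p : ℝ) : EReal)
  else if x = 0 then ⊥
  else if p = 0 then ((Real.log x : ℝ) : EReal)
  else ((-(x ^ p) : ℝ) : EReal)

/-- Modified harmonic number `h_c` on nonnegative integers. -/
def hmod (c : ℝ) (x : ℕ) : EReal :=
  if c = -1 then
    (if x = 0 then (⊥ : EReal)
     else (((∑ t ∈ Finset.range (x - 1), (1 : ℝ) / ((t : ℝ) + 1)) : ℝ) : EReal))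
  else (((∑ t ∈ Finset.range x, (1 : ℝ) / ((t : ℝ) + 1 + c)) : ℝ) : EReal)

/-- Condition 3b for a function defined on nonnegative integers. -/
def Cond3bNat (f : ℕ → EReal) : Prop :=
  ∀ k : ℕ, ∀ a : ℕ, 0 < a →
    f ((k + 2) * a) - f ((k + 1) * a) < f (k + 1) - f k
    ∧ f (k + 3) - f (k + 2) < f ((k + 2) * a) - f ((k + 1) * a)

lemma fin2_eq_or : ∀ (a i j : Fin 2), i ≠ j → a = i ∨ a = j := by decide

lemma mem_bundle {n m : ℕ} {A : Fin m → Fin n} {i : Fin n} {g : Fin m} :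
    g ∈ bundle A i ↔ A g = i := by simp [bundle]

lemma util_nonneg {m : ℕ} (u : Fin 2 → Fin m → ℝ) (hu : ∀ i g, 0 ≤ u i g)
    (i : Fin 2) (S : Finset (Fin m)) : 0 ≤ util u i S :=
  Finset.sum_nonneg fun g _ => hu i g

lemma sum_fin2 (F : Fin 2 → EReal) (i j : Fin 2) (h : i ≠ j) :
    ∑ k, F k = F i + F j := by
  have huniv : (Finset.univ : Finset (Fin 2)) = {i, j} := by
    ext a
    simp only [Finset.mem_univ, Finset.mem_insert, Finset.mem_singleton, true_iff]
    exact fin2_eq_or a i j h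
  rw [huniv, Finset.sum_pair h]

lemma util_bundle_add {m : ℕ} (u : Fin 2 → Fin m → ℝ) (A : Fin m → Fin 2)
    (k i j : Fin 2) (hij : i ≠ j) :
    util u k (bundle A i) + util u k (bundle A j) = util u k Finset.univ := by
  classical
  have hdis : Disjoint (bundle A i) (bundle A j) := by
    rw [Finset.disjoint_left]
    intro a hai haj
    rw [mem_bundle] at hai haj
    exact hij (hai.symm.trans haj)
  have huni : bundle A i ∪ bundle A j = Finset.univ := by
    ext a
    simp only [Finset.mem_union, mem_bundle, Finset.mem_univ, iff_true]
    exact fin2_eq_or (A a) i j hij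
  rw [util, util, util, ← Finset.sum_union hdis, huni]

lemma bundle_update_eq {m : ℕ} (A : Fin m → Fin 2) (g : Fin m) (i : Fin 2) :
    bundle (Function.update A g i) i = insert g (bundle A i) := by
  classical
  ext a
  simp only [mem_bundle, Finset.mem_insert, Function.update_apply]
  by_cases ha : a = g <;> simp [ha]

lemma bundle_update_ne {m : ℕ} (A : Fin m → Fin 2) (g : Fin m) (i k : Fin 2)
    (hk : k ≠ i) :
    bundle (Function.update A g i) k = (bundle A k).erase g := by
  classical
  ext a
  simp only [mem_bundle, Finset.mem_erase, Function.update_apply]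
  by_cases ha : a = g <;> simp [ha, hk.symm]

lemma chosen_lt {m : ℕ} (f : ℝ → EReal) (u : Fin 2 → Fin m → ℝ)
    (A B : Fin m → Fin 2) (i j : Fin 2) (hij : i ≠ j) (hA : Chosen f u A)
    (h : f (util u i (bundle A i)) + f (util u j (bundle A j)) <
         f (util u i (bundle B i)) + f (util u j (bundle B j))) : False := by
  have hle := hA B
  rw [welfare, welfare, sum_fin2 (fun k => f (util u k (bundle B k))) i j hij,
    sum_fin2 (fun k => f (util u k (bundle A k))) i j hij] at hle
  exact absurd hle (not_le.mpr h)

lemma pos_util {m : ℕ} (f : ℝ → EReal) (hcond : Cond2 f)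
    (u : Fin 2 → Fin m → ℝ) (hu : ∀ i g, 0 ≤ u i g)
    (hpa : PositiveAdmitting u) (A : Fin m → Fin 2) (hA : Chosen f u A)
    (i j : Fin 2) (hij : i ≠ j) : 0 < util u i (bundle A i) := by
  by_contra hx
  have hx0 : util u i (bundle A i) = 0 :=
    le_antisymm (not_lt.mp hx) (util_nonneg u hu i _)
  obtain ⟨B, hB⟩ := hpa
  refine chosen_lt f u A B i j hij hA ?_
  refine hcond _ _ _ _ (util_nonneg u hu i _) (util_nonneg u hu j _)
    (util_nonneg u hu i _) (util_nonneg u hu j _) ?_ ?_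
  · rw [hx0]
    have := util_nonneg u hu j (bundle A j)
    have hBi := (hB i).le
    have hBj := (hB j).le
    simp [min_le_iff, le_min_iff, *]
  · rw [hx0, zero_mul]
    exact mul_pos (hB i) (hB j)


theorem real_normalized_two_sufficient (f : ℝ → EReal)
    (hfmono : StrictMonoOn f (Set.Ici (0 : ℝ)))
    (hftop : ∀ x : ℝ, 0 ≤ x → f x ≠ ⊤)
    (hcond : Cond2 f) :
    (∀ m : ℕ, ∀ u : Fin 2 → Fin m → ℝ, (∀ i g, 0 ≤ u i g) →
        Normalized u → PositiveAdmitting u →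
        ∀ A : Fin m → Fin 2, Chosen f u A → EF1 u A) := by
  intro m u hu hnorm hpa A hA i j hjne
  classical
  by_cases hij : i = j
  · subst hij
    obtain ⟨g, hg⟩ := Finset.nonempty_iff_ne_empty.mpr hjne
    exact ⟨g, hg, Finset.sum_le_sum_of_subset_of_nonneg
      (Finset.erase_subset _ _) (fun h _ _ => hu i h)⟩
  by_contra hcon
  push_neg at hcon
  -- hcon : ∀ g ∈ bundle A j, util u i (bundle A i) < util u i ((bundle A j).erase g)
  set x := util u i (bundle A i) with hxdef
  set y := util u j (bundle A j) with hydef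
  set z := util u i (bundle A j) with hzdef
  set w := util u j (bundle A i) with hwdef
  have hx : 0 < x := pos_util f hcond u hu hpa A hA i j hij
  have hy : 0 < y := pos_util f hcond u hu hpa A hA j i (Ne.symm hij)
  have hsum1 : x + z = util u i Finset.univ := util_bundle_add u A i i j hij
  have hsum2 : w + y = util u j Finset.univ := util_bundle_add u A j i j hij
  have hnm : x + z = w + y := by rw [hsum1, hsum2, hnorm i j]
  have henvy : ∀ g ∈ bundle A j, x < z - u i g := by
    intro g hg
    have h1 : util u i ((bundle A j).erase g) = z - u i g := by
      rw [hzdef]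
      simp only [util]
      exact Finset.sum_erase_eq_sub hg
    have h2 := hcon g hg
    rwa [h1] at h2
  obtain ⟨g₀, hg₀⟩ := Finset.nonempty_iff_ne_empty.mpr hjne
  have hzx : x < z := by
    have := henvy g₀ hg₀
    have := hu i g₀
    linarith
  by_cases hyz : y < z
  · -- full swap
    set B : Fin m → Fin 2 := fun h => if A h = i then j else i with hBdef
    have hBi : bundle B i = bundle A j := by
      ext a
      simp only [mem_bundle, hBdef]
      by_cases ha : A a = i <;> simp [ha, hij, Ne.symm hij]
      exact (fin2_eq_or (A a) i j hij).resolve_left ha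
    have hBj : bundle B j = bundle A i := by
      ext a
      simp only [mem_bundle, hBdef]
      by_cases ha : A a = i <;> simp [ha, hij, Ne.symm hij]
    refine chosen_lt f u A B i j hij hA ?_
    rw [hBi, hBj, ← hzdef, ← hwdef, ← hxdef, ← hydef]
    have hwx : x < w := by linarith
    refine hcond x y z w hx.le hy.le (by linarith) (by linarith) ?_ ?_
    · exact le_min (le_trans (min_le_left _ _) hzx.le) (le_trans (min_le_left _ _) hwx.le)
    · nlinarith
  · -- move one good
    push_neg at hyz
    have hz : 0 < z := lt_trans hx hzx
    have hSne : ∃ h ∈ bundle A j, 0 < u i h := by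
      by_contra hS
      push_neg at hS
      have : z ≤ 0 := Finset.sum_nonpos hS
      linarith
    obtain ⟨h₀, hh₀, hh₀p⟩ := hSne
    set S : Finset (Fin m) := (bundle A j).filter (fun h => 0 < u i h) with hSdef
    obtain ⟨g, hgS, hgmin⟩ := S.exists_min_image (fun h => u j h / u i h)
      ⟨h₀, Finset.mem_filter.mpr ⟨hh₀, hh₀p⟩⟩
    obtain ⟨hgj, hgp⟩ := Finset.mem_filter.mp hgS
    set p := u i g with hpdef
    set q := u j g with hqdef
    have hq : 0 ≤ q := hu j g
    have key : q * z ≤ p * y := by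
      rw [hzdef, hydef, util, util, Finset.mul_sum, Finset.mul_sum]
      refine Finset.sum_le_sum ?_
      intro h hh
      by_cases hhp : 0 < u i h
      · have hmin := hgmin h (Finset.mem_filter.mpr ⟨hh, hhp⟩)
        rw [div_le_div_iff₀ hgp hhp] at hmin
        linarith
      · have : u i h = 0 := le_antisymm (not_lt.mp hhp) (hu i h)
        rw [this, mul_zero]
        exact mul_nonneg hgp.le (hu j h)
    have henvg : x < z - p := henvy g hgj
    set B : Fin m → Fin 2 := Function.update A g i with hBdef
    have hgni : g ∉ bundle A i := by
      rw [mem_bundle]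
      intro hgi
      exact hij (hgi.symm.trans (mem_bundle.mp hgj))
    have hBi : util u i (bundle B i) = p + x := by
      rw [hBdef, bundle_update_eq, hxdef, hpdef]
      simp only [util]
      exact Finset.sum_insert hgni
    have hBj : util u j (bundle B j) = y - q := by
      rw [hBdef, bundle_update_ne A g i j (Ne.symm hij), hydef, hqdef]
      simp only [util]
      exact Finset.sum_erase_eq_sub hgj
    have hyq : x < y - q := by nlinarith
    refine chosen_lt f u A B i j hij hA ?_
    rw [hBi, hBj, ← hxdef, ← hydef]
    refine hcond x y (p + x) (y - q) hx.le hy.le (by linarith) (by linarith) ?_ ?_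
    · exact le_min (le_trans (min_le_left _ _) (by linarith)) (le_trans (min_le_left _ _) hyq.le)
    · have key2 : x * y * z < (p + x) * (y - q) * z := by
        nlinarith [mul_le_mul_of_nonneg_left key (by linarith : (0:ℝ) ≤ p + x),
          mul_pos (mul_pos hy hgp) (by linarith : (0:ℝ) < z - p - x)]
      exact lt_of_mul_lt_mul_right key2 hz.le

end FairDiv
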